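/- Let N ≥ 3 be an integer. For α = (α₁,…,α_N) ∈ ℝ^N define the map T_α on the circle ℝ/ℤ by T_α x = x + α_i (mod 1) whenever the representative of x in [0,1) lies in [(i−1)/N, i/N), and let S(T_α) = ⋃_{m≥0} ⋂_{k≥m} T_α^k(ℝ/ℤ) be the set of points belonging to all but finitely many of the images T_α^k(ℝ/ℤ). Then for every ε > 0 there exists α ∈ ℝ^N such that the Haar (Lebesgue) measure of S(T_α) is at most 2ε; consequently, the infimum over α ∈ ℝ^N of the Haar measure of S(T_α) equals 0. -/

import Mathlib

open MeasureTheory Filter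

instance : Fact ((0:ℝ) < 1) := ⟨zero_lt_one⟩

/-- The representative in `[0,1)` of a point of the circle `ℝ/ℤ`. -/
noncomputable def circleRep (x : AddCircle (1:ℝ)) : ℝ :=
  (AddCircle.equivIco 1 0 x : ℝ)

/-- The piecewise translation `T_α` of the circle: a point whose representative lies in
`[i/N, (i+1)/N)` is translated by `α i` (0-indexed pieces). -/
noncomputable def pieceTranslation {N : ℕ} (α : Fin N → ℝ) (x : AddCircle (1:ℝ)) :
    AddCircle (1:ℝ) :=
  if h : ⌊circleRep x * N⌋₊ < N then x + (α ⟨⌊circleRep x * N⌋₊, h⟩ : ℝ) else x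

lemma circleRep_mem (x : AddCircle (1:ℝ)) : circleRep x ∈ Set.Ico (0:ℝ) 1 := by
  have := (AddCircle.equivIco 1 0 x).2
  simpa [circleRep] using this

lemma coe_circleRep (x : AddCircle (1:ℝ)) : ((circleRep x : ℝ) : AddCircle (1:ℝ)) = x := by
  exact (AddCircle.equivIco (1:ℝ) 0).symm_apply_apply x

lemma circleRep_coe (r : ℝ) (h : r ∈ Set.Ico (0:ℝ) 1) : circleRep (r : AddCircle (1:ℝ)) = r := by
  unfold circleRep
  rw [AddCircle.coe_equivIco_mk_apply]
  rw [div_one, mul_one, Int.fract_eq_self.2 ⟨h.1, h.2⟩]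


lemma pieceTranslation_apply {N : ℕ} (hN : 0 < N) (α : Fin N → ℝ) (x : AddCircle (1:ℝ)) :
    ∃ h : ⌊circleRep x * N⌋₊ < N,
      pieceTranslation α x = ((circleRep x + α ⟨⌊circleRep x * N⌋₊, h⟩ : ℝ) : AddCircle (1:ℝ)) := by
  have hr := circleRep_mem x
  have h : ⌊circleRep x * N⌋₊ < N := by
    rw [Nat.floor_lt (mul_nonneg hr.1 (Nat.cast_nonneg N))]
    exact mul_lt_of_lt_one_left (by exact_mod_cast hN) hr.2
  refine ⟨h, ?_⟩
  rw [pieceTranslation, dif_pos h, AddCircle.coe_add, coe_circleRep]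
/-- auxiliary target sets -/
def Jset (ℓ : ℝ) : Set (AddCircle (1:ℝ)) := (fun r : ℝ => (r : AddCircle (1:ℝ))) '' Set.Ico (-ℓ) ℓ

lemma Jmono {ℓ ℓ' : ℝ} (h : ℓ ≤ ℓ') : Jset ℓ ⊆ Jset ℓ' :=
  Set.image_mono (Set.Ico_subset_Ico (by linarith) h)

noncomputable def alphaVec (N : ℕ) (β : ℝ) : Fin N → ℝ :=
  fun i => if (i : ℕ) = N - 1 then β else -(i:ℝ)/N - β

section main
variable {N : ℕ} {β : ℝ}

lemma base_lem (hN : 3 ≤ N) (hβ0 : 0 < β) (hβ : β ≤ 1/(2*N)) (x : AddCircle (1:ℝ)) :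
    pieceTranslation (alphaVec N β) x ∈ Jset (1/N) := by
  have hN0 : 0 < N := by omega
  have hNR : (0:ℝ) < N := by exact_mod_cast hN0
  have hu : (1/(N:ℝ)) * N = 1 := by field_simp
  have hβN : β ≤ 1/(N:ℝ) := hβ.trans (by
    rw [div_le_div_iff₀ (by positivity) hNR]; linarith)
  obtain ⟨h, hTx⟩ := pieceTranslation_apply hN0 (alphaVec N β) x
  set r := circleRep x with hr
  set i := ⌊r * N⌋₊ with hi
  have hrm := circleRep_mem x
  have hle : (i:ℝ) ≤ r * N := Nat.floor_le (mul_nonneg hrm.1 (Nat.cast_nonneg N))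
  have hlt : r * N < i + 1 := Nat.lt_floor_add_one _
  rw [hTx]
  by_cases hcase : i = N - 1
  · have hα : alphaVec N β ⟨i, h⟩ = β := by simp [alphaVec, hcase]
    rw [hα]
    have hcast : ((N - 1 : ℕ) : ℝ) = (N:ℝ) - 1 := by
      rw [Nat.cast_sub (by omega)]; norm_num
    have hri : (N:ℝ) - 1 ≤ r * N := by rw [← hcast, ← hcase]; exact hle
    have hβN' : β < 1/(N:ℝ) := lt_of_le_of_lt hβ (by
      rw [div_lt_div_iff₀ (by positivity) hNR]; linarith)
    refine ⟨r + β - 1, ⟨?_, ?_⟩, ?_⟩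
    · nlinarith [mul_pos hβ0 hNR]
    · linarith [hrm.2]
    · have h1 : ((r + β - 1 + 1 : ℝ) : AddCircle (1:ℝ)) = ((r + β - 1 : ℝ) : AddCircle (1:ℝ)) :=
        AddCircle.coe_add_period 1 _
      have h2 : r + β - 1 + 1 = r + β := by ring
      rw [h2] at h1
      exact h1.symm
  · have hα : alphaVec N β ⟨i, h⟩ = -(i:ℝ)/N - β := by simp [alphaVec, hcase]
    rw [hα]
    have h1 : 0 ≤ r - i/N := by
      rw [sub_nonneg, div_le_iff₀ hNR]; linarith
    have h2 : r - i/N < 1/N := by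
      rw [sub_lt_iff_lt_add, ← add_div, lt_div_iff₀ hNR]; linarith
    have heq : r + (-(i:ℝ)/N - β) = (r - (i:ℝ)/N) - β := by ring
    exact ⟨r + (-(i:ℝ)/N - β), ⟨by linarith, by linarith⟩, rfl⟩

lemma step_lem (hN : 3 ≤ N) (hβ0 : 0 < β) (hβ : β ≤ 1/(2*N)) {ℓ : ℝ}
    (hℓ1 : 2*β ≤ ℓ) (hℓ2 : ℓ ≤ 1/N) {x : AddCircle (1:ℝ)} (hx : x ∈ Jset ℓ) :
    pieceTranslation (alphaVec N β) x ∈ Jset (max (ℓ - β) (2*β)) := by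
  have hN0 : 0 < N := by omega
  have hNR : (0:ℝ) < N := by exact_mod_cast hN0
  have hinvN : 1/(N:ℝ) ≤ 1/3 := by
    apply div_le_div_of_nonneg_left one_pos.le (by norm_num)
    exact_mod_cast hN
  obtain ⟨s, ⟨hs1, hs2⟩, rfl⟩ := hx
  show pieceTranslation (alphaVec N β) ((s : ℝ) : AddCircle (1:ℝ)) ∈ Jset (max (ℓ - β) (2*β))
  have hℓ0 : 0 < ℓ := lt_of_lt_of_le (by linarith) hℓ1
  have hmaxl := le_max_left (ℓ - β) (2*β)
  have hmaxr := le_max_right (ℓ - β) (2*β)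
  by_cases hs0 : 0 ≤ s
  · -- s ∈ [0, ℓ), piece 0, translate by -β
    have hrep : circleRep ((s:ℝ) : AddCircle (1:ℝ)) = s :=
      circleRep_coe s ⟨hs0, by linarith⟩
    obtain ⟨h, hTx⟩ := pieceTranslation_apply hN0 (alphaVec N β) ((s:ℝ) : AddCircle (1:ℝ))
    have hfl : ⌊s * (N:ℝ)⌋₊ = 0 := by
      rw [Nat.floor_eq_zero]
      calc s * (N:ℝ) < ℓ * N := by apply mul_lt_mul_of_pos_right hs2 hNR
        _ ≤ (1/N) * N := by nlinarith
        _ = 1 := by field_simp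
    have hval : (⟨⌊circleRep ((s:ℝ) : AddCircle (1:ℝ)) * (N:ℝ)⌋₊, h⟩ : Fin N) = ⟨0, hN0⟩ :=
      Fin.ext (by show ⌊circleRep ((s:ℝ) : AddCircle (1:ℝ)) * (N:ℝ)⌋₊ = 0; rw [hrep]; exact hfl)
    have hα : alphaVec N β ⟨0, hN0⟩ = -β := by
      have h0 : (0:ℕ) ≠ N - 1 := by omega
      simp [alphaVec, h0]
    rw [hTx, hval, hα, hrep]
    exact ⟨s + -β, ⟨by linarith, by linarith⟩, rfl⟩
  · -- s ∈ [-ℓ, 0), piece N-1, translate by β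
    push_neg at hs0
    have hco : ((s:ℝ) : AddCircle (1:ℝ)) = ((s + 1 : ℝ) : AddCircle (1:ℝ)) :=
      (AddCircle.coe_add_period 1 s).symm
    have hmem : s + 1 ∈ Set.Ico (0:ℝ) 1 := ⟨by linarith [hinvN, hℓ2, hs1], by linarith⟩
    have hrep : circleRep ((s + 1 : ℝ) : AddCircle (1:ℝ)) = s + 1 := circleRep_coe _ hmem
    rw [hco]
    obtain ⟨h, hTx⟩ := pieceTranslation_apply hN0 (alphaVec N β) ((s + 1:ℝ) : AddCircle (1:ℝ))
    have hu : (1/(N:ℝ)) * N = 1 := by field_simp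
    have hfl : ⌊(s + 1) * (N:ℝ)⌋₊ = N - 1 := by
      rw [Nat.floor_eq_iff (by nlinarith [hmem.1])]
      have hcast : ((N - 1 : ℕ) : ℝ) = (N:ℝ) - 1 := by
        rw [Nat.cast_sub (by omega)]; norm_num
      rw [hcast]
      constructor
      · nlinarith [hmem.1]
      · nlinarith [hmem.2]
    have hval : (⟨⌊circleRep ((s + 1:ℝ) : AddCircle (1:ℝ)) * (N:ℝ)⌋₊, h⟩ : Fin N) =
        ⟨N - 1, by omega⟩ := Fin.ext (by
          show ⌊circleRep ((s + 1:ℝ) : AddCircle (1:ℝ)) * (N:ℝ)⌋₊ = N - 1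
          rw [hrep]; exact hfl)
    have hα : alphaVec N β ⟨N - 1, by omega⟩ = β := by simp [alphaVec]
    rw [hTx, hval, hα, hrep]
    refine ⟨s + β, ⟨by linarith, by linarith⟩, ?_⟩
    have h1 : ((s + β + 1 : ℝ) : AddCircle (1:ℝ)) = ((s + β : ℝ) : AddCircle (1:ℝ)) :=
      AddCircle.coe_add_period 1 _
    have h2 : s + β + 1 = s + 1 + β := by ring
    rw [h2] at h1
    exact h1.symm

end main
/-- The focusing set `S(T) = liminf_n T^n X`: points belonging to all but finitely
many of the images `T^n X`. -/
def focusingSet {X : Type*} (T : X → X) : Set X :=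
  ⋃ m : ℕ, ⋂ k : ℕ, ⋂ (_ : m ≤ k), T^[k] '' Set.univ

/-- For every `ε > 0` there is a choice of the translation vector `α` for which the
focusing set of `T_α` has Haar measure at most `2ε`; consequently the infimum over `α`
of the measure of the focusing set is `0`. -/
theorem focusing_set_measure_inf_zero (N : ℕ) (hN : 3 ≤ N) :
    (∀ ε : ℝ, 0 < ε → ∃ α : Fin N → ℝ,
      volume (focusingSet (pieceTranslation α)) ≤ ENNReal.ofReal (2 * ε)) ∧
    ⨅ α : Fin N → ℝ, volume (focusingSet (pieceTranslation α)) = 0 := by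
  have hN0 : 0 < N := by omega
  have hNR : (0:ℝ) < N := by exact_mod_cast hN0
  have part1 : ∀ ε : ℝ, 0 < ε → ∃ α : Fin N → ℝ,
      volume (focusingSet (pieceTranslation α)) ≤ ENNReal.ofReal (2 * ε) := by
    intro ε hε
    set β := min (ε/2) (1/(2*(N:ℝ))) with hβdef
    have hβ0 : 0 < β := lt_min (by linarith) (by positivity)
    have hβ : β ≤ 1/(2*(N:ℝ)) := min_le_right _ _
    have hβε : β ≤ ε/2 := min_le_left _ _
    have h2β : 2*β ≤ 1/(N:ℝ) := by
      have : 2*(1/(2*(N:ℝ))) = 1/N := by field_simp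
      linarith
    refine ⟨alphaVec N β, ?_⟩
    set T := pieceTranslation (alphaVec N β) with hT
    have key : ∀ k : ℕ, T^[k+1] '' Set.univ ⊆ Jset (max (1/(N:ℝ) - k*β) (2*β)) := by
      intro k
      induction k with
      | zero =>
        rintro y ⟨x, -, rfl⟩
        have hb := base_lem hN hβ0 hβ x
        have h1 : T^[0+1] x = T x := by rw [Function.iterate_one]
        rw [h1]
        refine Jmono ?_ hb
        push_cast
        simp only [zero_mul, sub_zero]
        exact le_max_left _ _
      | succ k ih =>
        rintro y ⟨x, -, rfl⟩
        rw [Function.iterate_succ_apply']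
        have hx : T^[k+1] x ∈ Jset (max (1/(N:ℝ) - k*β) (2*β)) :=
          ih ⟨x, trivial, rfl⟩
        have hkβ : (0:ℝ) ≤ (k:ℝ)*β := mul_nonneg (Nat.cast_nonneg k) hβ0.le
        have hstep := step_lem hN hβ0 hβ (le_max_right _ _)
          (max_le (by linarith) h2β) hx
        refine Jmono ?_ hstep
        push_cast
        have hexp : ((k:ℝ)+1)*β = (k:ℝ)*β + β := by ring
        apply max_le
        · rw [sub_le_iff_le_add]
          apply max_le
          · have := le_max_left (1/(N:ℝ) - ((k:ℝ)+1)*β) (2*β); linarith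
          · have := le_max_right (1/(N:ℝ) - ((k:ℝ)+1)*β) (2*β); linarith
        · exact le_max_right _ _
    obtain ⟨k₀, hk₀⟩ := exists_nat_ge (1/((N:ℝ)*β))
    have hk₀' : 1/(N:ℝ) ≤ k₀ * β := by
      have he : 1/(N:ℝ) = (1/((N:ℝ)*β))*β := by field_simp
      rw [he]
      exact mul_le_mul_of_nonneg_right hk₀ hβ0.le
    have hsub : focusingSet T ⊆ Jset (2*β) := by
      intro x hx
      simp only [focusingSet, Set.mem_iUnion, Set.mem_iInter] at hx
      obtain ⟨m, hm⟩ := hx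
      have hx2 := hm (m + k₀ + 1) (by omega)
      have hmem := key (m + k₀) hx2
      refine Jmono ?_ hmem
      apply max_le ?_ le_rfl
      push_cast
      nlinarith [mul_nonneg (Nat.cast_nonneg m : (0:ℝ) ≤ m) hβ0.le]
    have hball : Jset (2*β) ⊆ Metric.closedBall (0 : AddCircle (1:ℝ)) (2*β) := by
      rintro _ ⟨s, ⟨hs1, hs2⟩, rfl⟩
      rw [Metric.mem_closedBall, dist_zero_right]
      calc ‖((s:ℝ) : AddCircle (1:ℝ))‖ ≤ ‖s‖ :=
            QuotientAddGroup.norm_mk_le_norm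
        _ = |s| := Real.norm_eq_abs s
        _ ≤ 2*β := abs_le.mpr ⟨hs1, hs2.le⟩
    calc volume (focusingSet T)
        ≤ volume (Metric.closedBall (0 : AddCircle (1:ℝ)) (2*β)) :=
          measure_mono (hsub.trans hball)
      _ = ENNReal.ofReal (min 1 (2*(2*β))) := by rw [AddCircle.volume_closedBall]
      _ ≤ ENNReal.ofReal (2*ε) := ENNReal.ofReal_le_ofReal
          ((min_le_right _ _).trans (by linarith))
  refine ⟨part1, ?_⟩
  refine le_antisymm ?_ zero_le
  refine ENNReal.le_of_forall_pos_le_add fun δ hδ _ => ?_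
  obtain ⟨α, hα⟩ := part1 ((δ:ℝ)/2) (div_pos (by exact_mod_cast hδ) two_pos)
  refine (iInf_le _ α).trans (hα.trans ?_)
  rw [show 2*((δ:ℝ)/2) = (δ:ℝ) by ring, ENNReal.ofReal_coe_nnreal, zero_add]
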